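/- arXiv:2410.00687 — 2 statements merged into one kernel-verified Lean document; each statement's English description precedes it below -/
import Mathlib

section
/- Let L > 0 and δ̄ ≥ 0, let δ : [0, L] → ℝ be continuous with 0 ≤ δ(ξ) ≤ δ̄ for all ξ ∈ [0, L], and let S = {(ξ, η) ∈ ℝ² : ξ ∈ [0, L], 0 ≤ η ≤ δ(ξ)} be the strip under the graph of δ. If v : ℝ² → ℝ² is continuously differentiable on an open set containing S, then ∫₀^L ‖v(ξ, 0) − v(ξ, δ(ξ))‖² dξ ≤ δ̄ · ∫₀^L ∫₀^{δ(ξ)} ‖∂_η v(ξ, η)‖² dη dξ, where ∂_η v denotes the partial derivative of v with respect to the second coordinate. -/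
open MeasureTheory Set intervalIntegral

lemma cs_aux (T : ℝ) (hT : 0 ≤ T) (φ : ℝ → ℝ) (hφ : ContinuousOn φ (Set.Icc 0 T))
    (hφ0 : ∀ x ∈ Set.Icc (0:ℝ) T, 0 ≤ φ x) :
    (∫ x in (0:ℝ)..T, φ x) ^ 2 ≤ T * ∫ x in (0:ℝ)..T, φ x ^ 2 := by
  set μ : Measure ℝ := volume.restrict (Set.Ioc (0:ℝ) T) with hμ
  have hμuniv : μ Set.univ = ENNReal.ofReal T := by
    rw [hμ, Measure.restrict_apply_univ, Real.volume_Ioc, sub_zero]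
  haveI : IsFiniteMeasure μ := ⟨by rw [hμuniv]; exact ENNReal.ofReal_lt_top⟩
  have hmeas : AEStronglyMeasurable φ μ :=
    (hφ.mono Set.Ioc_subset_Icc_self).aestronglyMeasurable measurableSet_Ioc
  obtain ⟨M, hM⟩ := isCompact_Icc.exists_bound_of_continuousOn hφ
  have hbd : ∀ᵐ x ∂μ, ‖φ x‖ ≤ M :=
    (ae_restrict_iff' measurableSet_Ioc).mpr
      (ae_of_all _ fun x hx => hM x (Set.Ioc_subset_Icc_self hx))
  have hmem2 : MemLp φ (ENNReal.ofReal 2) μ := MemLp.of_bound hmeas M hbd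
  have hpq : (2:ℝ).HolderConjugate 2 := Real.holderConjugate_iff.mpr ⟨one_lt_two, by norm_num⟩
  have hφae : 0 ≤ᵐ[μ] φ :=
    (ae_restrict_iff' measurableSet_Ioc).mpr
      (ae_of_all _ fun x hx => hφ0 x (Set.Ioc_subset_Icc_self hx))
  have h := MeasureTheory.integral_mul_le_Lp_mul_Lq_of_nonneg hpq hφae
    (ae_of_all _ fun _ => zero_le_one) hmem2 (memLp_const (1:ℝ))
  simp only [mul_one, Real.rpow_two, Real.one_rpow, one_pow] at h
  have hint1 : ∫ _ : ℝ, (1:ℝ) ∂μ = T := by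
    rw [MeasureTheory.integral_const, smul_eq_mul, mul_one, measureReal_def, hμuniv, ENNReal.toReal_ofReal hT]
  rw [hint1] at h
  have hIoc : ∫ x in (0:ℝ)..T, φ x = ∫ x, φ x ∂μ := by
    rw [intervalIntegral.integral_of_le hT]
  have hIoc2 : ∫ x in (0:ℝ)..T, φ x ^ 2 = ∫ x, φ x ^ 2 ∂μ := by
    rw [intervalIntegral.integral_of_le hT]
  have hnn : 0 ≤ ∫ x, φ x ∂μ := integral_nonneg_of_ae hφae
  have hnn2 : 0 ≤ ∫ x, φ x ^ 2 ∂μ := integral_nonneg fun x => sq_nonneg _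
  rw [hIoc, hIoc2]
  calc (∫ x, φ x ∂μ) ^ 2 ≤ ((∫ x, φ x ^ 2 ∂μ) ^ ((1:ℝ)/2) * T ^ ((1:ℝ)/2)) ^ 2 :=
        pow_le_pow_left₀ hnn h 2
    _ = T * ∫ x, φ x ^ 2 ∂μ := by
        rw [mul_pow, ← Real.sqrt_eq_rpow, ← Real.sqrt_eq_rpow, Real.sq_sqrt hnn2,
          Real.sq_sqrt hT, mul_comm]

/-- Strip estimate between the straight edge `η = 0` and the curved graph `η = δ(ξ)`:
`∫₀^L ‖v(ξ,0) − v(ξ,δ(ξ))‖² dξ ≤ δ̄ · ∫₀^L ∫₀^{δ(ξ)} ‖∂_η v(ξ,η)‖² dη dξ`. -/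
theorem strip_lemma
    (L δbar : ℝ) (hL : 0 < L) (hδbar : 0 ≤ δbar)
    (δ : ℝ → ℝ) (hδcont : ContinuousOn δ (Set.Icc 0 L))
    (hδnonneg : ∀ ξ ∈ Set.Icc (0:ℝ) L, 0 ≤ δ ξ)
    (hδle : ∀ ξ ∈ Set.Icc (0:ℝ) L, δ ξ ≤ δbar)
    (U : Set (ℝ × ℝ)) (hU : IsOpen U)
    (hSU : ∀ ξ ∈ Set.Icc (0:ℝ) L, ∀ η ∈ Set.Icc (0:ℝ) (δ ξ), (ξ, η) ∈ U)
    (v : ℝ × ℝ → EuclideanSpace ℝ (Fin 2)) (hv : ContDiffOn ℝ 1 v U) :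
    ∫ ξ in (0:ℝ)..L, ‖v (ξ, 0) - v (ξ, δ ξ)‖ ^ 2 ≤
      δbar * ∫ ξ in (0:ℝ)..L, ∫ η in (0:ℝ)..(δ ξ), ‖fderiv ℝ v (ξ, η) (0, 1)‖ ^ 2 := by
  -- the integrand of the inner integral
  set f : ℝ × ℝ → ℝ := fun p => ‖fderiv ℝ v p ((0:ℝ), (1:ℝ))‖ ^ 2 with hf
  -- continuity of the derivative on U
  have hfdc : ContinuousOn (fderiv ℝ v) U := hv.continuousOn_fderiv_of_isOpen hU le_rfl
  have hfUc : ContinuousOn f U := by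
    have : ContinuousOn (fun p => fderiv ℝ v p ((0:ℝ), (1:ℝ))) U :=
      (ContinuousLinearMap.apply ℝ (EuclideanSpace ℝ (Fin 2))
        ((0:ℝ), (1:ℝ))).continuous.comp_continuousOn hfdc
    exact this.norm.pow 2
  -- the compact strip K
  set K : Set (ℝ × ℝ) :=
    (fun q : ℝ × ℝ => (q.2, q.1 * δ q.2)) '' (Set.Icc 0 1 ×ˢ Set.Icc 0 L) with hK
  have hKcomp : IsCompact K := by
    apply (isCompact_Icc.prod isCompact_Icc).image_of_continuousOn
    apply ContinuousOn.prodMk (continuous_snd.continuousOn)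
    exact continuous_fst.continuousOn.mul
      (hδcont.comp continuous_snd.continuousOn (fun q hq => hq.2))
  have hKU : K ⊆ U := by
    rintro p ⟨⟨t, ξ⟩, ⟨ht, hξ⟩, rfl⟩
    exact hSU ξ hξ (t * δ ξ) ⟨mul_nonneg ht.1 (hδnonneg ξ hξ),
      by nlinarith [hδnonneg ξ hξ, ht.1, ht.2]⟩
  have hmemK : ∀ ξ ∈ Set.Icc (0:ℝ) L, ∀ η ∈ Set.Icc (0:ℝ) (δ ξ), (ξ, η) ∈ K := by
    intro ξ hξ η hη
    rcases eq_or_lt_of_le (hδnonneg ξ hξ) with h0 | h0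
    · have hη0 : η = 0 := le_antisymm (hη.2.trans h0.symm.le) hη.1
      exact ⟨(0, ξ), ⟨⟨le_refl 0, zero_le_one⟩, hξ⟩, by simp [hη0]⟩
    · refine ⟨(η / δ ξ, ξ), ⟨⟨div_nonneg hη.1 h0.le, (div_le_one h0).mpr hη.2⟩, hξ⟩, ?_⟩
      simp [div_mul_cancel₀ η h0.ne']
  -- a compact set squeezed between K and U
  obtain ⟨K', hK'comp, hKint, hK'U⟩ := exists_compact_between hKcomp hU hKU
  -- Urysohn cut-off
  have hclos : IsCompact (closure (interior K')) :=
    hK'comp.of_isClosed_subset isClosed_closure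
      (closure_minimal interior_subset hK'comp.isClosed)
  obtain ⟨φ, hφsupp, hφ1, hφ01⟩ :=
    exists_tsupport_one_of_isOpen_isClosed isOpen_interior hclos hKcomp.isClosed hKint
  -- globally continuous replacement of f
  set g : ℝ × ℝ → ℝ := fun p => φ p * f p with hg
  have hgc : Continuous g := by
    rw [continuous_iff_continuousAt]
    intro p
    by_cases hp : p ∈ U
    · exact φ.continuous.continuousAt.mul (hfUc.continuousAt (hU.mem_nhds hp))
    · have hp' : p ∉ tsupport φ := fun h => hp (hK'U (interior_subset (hφsupp h)))
      have hnhds : (tsupport φ)ᶜ ∈ nhds p :=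
        (isClosed_tsupport φ).isOpen_compl.mem_nhds hp'
      refine ContinuousAt.congr (continuousAt_const (y := (0:ℝ))) ?_
      filter_upwards [hnhds] with q hq
      simp [hg, image_eq_zero_of_notMem_tsupport hq]
  have hgK : ∀ p ∈ K, g p = f p := fun p hp => by simp [hg, hφ1 hp]
  -- continuous extension of δ
  set δt : ℝ → ℝ := Set.IccExtend hL.le (fun x : Set.Icc (0:ℝ) L => δ x) with hδt
  have hδtc : Continuous δt :=
    Continuous.Icc_extend' (continuousOn_iff_continuous_restrict.mp hδcont)
  have hδteq : ∀ ξ ∈ Set.Icc (0:ℝ) L, δt ξ = δ ξ := fun ξ hξ =>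
    Set.IccExtend_of_mem hL.le _ hξ
  -- the (continuous) inner integral
  set G : ℝ → ℝ := fun ξ => ∫ η in (0:ℝ)..(δt ξ), g (ξ, η) with hG
  have hGc : Continuous G :=
    continuous_parametric_intervalIntegral_of_continuous
      (f := fun ξ η => g (ξ, η)) (μ := volume) hgc hδtc
  -- pointwise estimate
  have hpt : ∀ ξ ∈ Set.Icc (0:ℝ) L, ‖v (ξ, 0) - v (ξ, δ ξ)‖ ^ 2 ≤ δbar * G ξ := by
    intro ξ hξ
    set T := δ ξ with hTdef
    have hT : 0 ≤ T := hδnonneg ξ hξ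
    have hTb : T ≤ δbar := hδle ξ hξ
    have hmemU : ∀ η ∈ Set.Icc (0:ℝ) T, (ξ, η) ∈ U := fun η hη => hSU ξ hξ η hη
    have hderiv : ∀ η ∈ Set.uIcc (0:ℝ) T,
        HasDerivAt (fun η => v (ξ, η)) (fderiv ℝ v (ξ, η) ((0:ℝ), (1:ℝ))) η := by
      intro η hη
      rw [Set.uIcc_of_le hT] at hη
      have hdiff : DifferentiableAt ℝ v (ξ, η) :=
        (hv.differentiableOn one_ne_zero).differentiableAt (hU.mem_nhds (hmemU η hη))
      have hc : HasDerivAt (fun η : ℝ => ((ξ, η) : ℝ × ℝ)) ((0:ℝ), (1:ℝ)) η :=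
        (hasDerivAt_const η ξ).prodMk (hasDerivAt_id η)
      exact hdiff.hasFDerivAt.comp_hasDerivAt η hc
    have hcontw : ContinuousOn (fun η => fderiv ℝ v (ξ, η) ((0:ℝ), (1:ℝ))) (Set.Icc 0 T) := by
      have h1 : ContinuousOn (fun η : ℝ => ((ξ, η) : ℝ × ℝ)) (Set.Icc 0 T) :=
        (continuous_const.prodMk continuous_id).continuousOn
      have h2 : ContinuousOn (fun η : ℝ => fderiv ℝ v (ξ, η)) (Set.Icc 0 T) :=
        hfdc.comp h1 (fun η hη => hmemU η hη)
      exact (ContinuousLinearMap.apply ℝ (EuclideanSpace ℝ (Fin 2))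
        ((0:ℝ), (1:ℝ))).continuous.comp_continuousOn h2
    have hint : IntervalIntegrable (fun η => fderiv ℝ v (ξ, η) ((0:ℝ), (1:ℝ))) volume 0 T :=
      (hcontw.mono (by rw [Set.uIcc_of_le hT])).intervalIntegrable
    have hftc : ∫ η in (0:ℝ)..T, fderiv ℝ v (ξ, η) ((0:ℝ), (1:ℝ)) = v (ξ, T) - v (ξ, 0) :=
      intervalIntegral.integral_eq_sub_of_hasDerivAt hderiv hint
    have hnorm : ‖v (ξ, 0) - v (ξ, T)‖ ≤
        ∫ η in (0:ℝ)..T, ‖fderiv ℝ v (ξ, η) ((0:ℝ), (1:ℝ))‖ := by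
      rw [norm_sub_rev, ← hftc]
      exact intervalIntegral.norm_integral_le_integral_norm hT
    have hcs := cs_aux T hT (fun η => ‖fderiv ℝ v (ξ, η) ((0:ℝ), (1:ℝ))‖)
      hcontw.norm (fun x _ => norm_nonneg _)
    have hGeq : G ξ = ∫ η in (0:ℝ)..T, ‖fderiv ℝ v (ξ, η) ((0:ℝ), (1:ℝ))‖ ^ 2 := by
      rw [hG]
      simp only [hδteq ξ hξ, ← hTdef]
      apply intervalIntegral.integral_congr
      intro η hη
      rw [Set.uIcc_of_le hT] at hη
      exact hgK (ξ, η) (hmemK ξ hξ η hη)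
    have hinn : 0 ≤ ∫ η in (0:ℝ)..T, ‖fderiv ℝ v (ξ, η) ((0:ℝ), (1:ℝ))‖ ^ 2 :=
      intervalIntegral.integral_nonneg hT (fun x _ => sq_nonneg _)
    calc ‖v (ξ, 0) - v (ξ, T)‖ ^ 2
        ≤ (∫ η in (0:ℝ)..T, ‖fderiv ℝ v (ξ, η) ((0:ℝ), (1:ℝ))‖) ^ 2 :=
          pow_le_pow_left₀ (norm_nonneg _) hnorm 2
      _ ≤ T * ∫ η in (0:ℝ)..T, ‖fderiv ℝ v (ξ, η) ((0:ℝ), (1:ℝ))‖ ^ 2 := hcs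
      _ ≤ δbar * ∫ η in (0:ℝ)..T, ‖fderiv ℝ v (ξ, η) ((0:ℝ), (1:ℝ))‖ ^ 2 := by
          exact mul_le_mul_of_nonneg_right hTb hinn
      _ = δbar * G ξ := by rw [hGeq]
  -- integrability of both sides
  have hlhs_cont : ContinuousOn (fun ξ => ‖v (ξ, 0) - v (ξ, δ ξ)‖ ^ 2) (Set.Icc 0 L) := by
    have hvc : ContinuousOn v U := hv.continuousOn
    have h1 : ContinuousOn (fun ξ : ℝ => v (ξ, 0)) (Set.Icc 0 L) :=
      hvc.comp ((continuous_id.prodMk continuous_const).continuousOn)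
        (fun ξ hξ => hSU ξ hξ 0 ⟨le_refl 0, hδnonneg ξ hξ⟩)
    have h2 : ContinuousOn (fun ξ : ℝ => v (ξ, δ ξ)) (Set.Icc 0 L) :=
      hvc.comp (continuousOn_id.prodMk hδcont)
        (fun ξ hξ => hSU ξ hξ (δ ξ) ⟨hδnonneg ξ hξ, le_refl _⟩)
    exact ((h1.sub h2).norm).pow 2
  have hlhs_int : IntervalIntegrable (fun ξ => ‖v (ξ, 0) - v (ξ, δ ξ)‖ ^ 2) volume 0 L :=
    (hlhs_cont.mono (by rw [Set.uIcc_of_le hL.le])).intervalIntegrable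
  have hrhs_int : IntervalIntegrable (fun ξ => δbar * G ξ) volume 0 L :=
    (continuous_const.mul hGc).intervalIntegrable 0 L
  calc ∫ ξ in (0:ℝ)..L, ‖v (ξ, 0) - v (ξ, δ ξ)‖ ^ 2
      ≤ ∫ ξ in (0:ℝ)..L, δbar * G ξ :=
        intervalIntegral.integral_mono_on hL.le hlhs_int hrhs_int hpt
    _ = δbar * ∫ ξ in (0:ℝ)..L, G ξ := intervalIntegral.integral_const_mul δbar G
    _ = δbar * ∫ ξ in (0:ℝ)..L, ∫ η in (0:ℝ)..(δ ξ), ‖fderiv ℝ v (ξ, η) (0, 1)‖ ^ 2 := by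
        congr 1
        apply intervalIntegral.integral_congr
        intro ξ hξ
        rw [Set.uIcc_of_le hL.le] at hξ
        rw [hG]
        simp only [hδteq ξ hξ]
        apply intervalIntegral.integral_congr
        intro η hη
        rw [Set.uIcc_of_le (hδnonneg ξ hξ)] at hη
        exact hgK (ξ, η) (hmemK ξ hξ η hη)
end

section
/- Let L > 0 and δ̄ ≥ 0, let δ : [0, L] → ℝ be continuous with 0 ≤ δ(ξ) ≤ δ̄ for all ξ ∈ [0, L], and let S = {(ξ, η) ∈ ℝ² : ξ ∈ [0, L], 0 ≤ η ≤ δ(ξ)}. If v : ℝ² → ℝ is continuously differentiable on an open set containing S, then ∫₀^L ∫₀^{δ(ξ)} v(ξ, η)² dη dξ ≤ 2 δ̄ · ∫₀^L v(ξ, δ(ξ))² dξ + 2 δ̄² · ∫₀^L ∫₀^{δ(ξ)} (∂_η v(ξ, η))² dη dξ, where ∂_η v denotes the partial derivative of v with respect to the second coordinate. -/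
open Set intervalIntegral

/-- Cauchy–Schwarz for interval integrals of continuous functions. -/
lemma bk_cs_interval {a b : ℝ} (hab : a ≤ b) {g : ℝ → ℝ}
    (hg : ContinuousOn g (Set.Icc a b)) :
    (∫ t in a..b, g t) ^ 2 ≤ (b - a) * ∫ t in a..b, (g t) ^ 2 := by
  have huIcc : Set.uIcc a b = Set.Icc a b := Set.uIcc_of_le hab
  have hgi : IntervalIntegrable g MeasureTheory.volume a b :=
    (huIcc ▸ hg).intervalIntegrable
  have hg2i : IntervalIntegrable (fun t => (g t) ^ 2) MeasureTheory.volume a b :=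
    (huIcc ▸ (hg.pow 2)).intervalIntegrable
  set I := ∫ t in a..b, g t with hI
  set A := ∫ t in a..b, (g t) ^ 2 with hA
  rcases eq_or_lt_of_le hab with rfl | hlt
  · simp [hI, hA]
  have key : ∫ t in a..b, ((b - a) * g t - I) ^ 2
      = (b - a) ^ 2 * A - (b - a) * I ^ 2 := by
    have hfun : ∀ t, ((b - a) * g t - I) ^ 2
        = (b - a) ^ 2 * (g t) ^ 2 - (2 * (b - a) * I) * g t + I ^ 2 := by
      intro t; ring
    simp_rw [hfun]
    rw [intervalIntegral.integral_add (((hg2i.const_mul _).sub (hgi.const_mul _)))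
        intervalIntegrable_const,
      intervalIntegral.integral_sub (hg2i.const_mul _) (hgi.const_mul _),
      intervalIntegral.integral_const_mul, intervalIntegral.integral_const_mul,
      intervalIntegral.integral_const]
    simp only [smul_eq_mul, ← hI, ← hA]
    ring
  have h0 : 0 ≤ ∫ t in a..b, ((b - a) * g t - I) ^ 2 :=
    intervalIntegral.integral_nonneg hab fun t _ => sq_nonneg _
  rw [key] at h0
  nlinarith [sub_pos.mpr hlt]

/-- 1D Bramble–King inequality along a vertical fiber. -/
lemma bk_oneD {δbar d : ℝ} (hd0 : 0 ≤ d) (hdbar : d ≤ δbar)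
    {g g' : ℝ → ℝ} (hg : ∀ t ∈ Set.Icc 0 d, HasDerivAt g (g' t) t)
    (hgc : ContinuousOn g (Set.Icc 0 d))
    (hg'c : ContinuousOn g' (Set.Icc 0 d)) :
    ∫ η in (0:ℝ)..d, (g η) ^ 2
      ≤ 2 * δbar * (g d) ^ 2 + 2 * δbar ^ 2 * ∫ η in (0:ℝ)..d, (g' η) ^ 2 := by
  have hδbar : 0 ≤ δbar := hd0.trans hdbar
  set A := ∫ η in (0:ℝ)..d, (g' η) ^ 2 with hA
  have hA0 : 0 ≤ A := intervalIntegral.integral_nonneg hd0 fun _ _ => sq_nonneg _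
  have hptw : ∀ η ∈ Set.Icc (0:ℝ) d, (g η) ^ 2 ≤ 2 * (g d) ^ 2 + 2 * δbar * A := by
    intro η hη
    have hηd : η ≤ d := hη.2
    have hsub : Set.Icc η d ⊆ Set.Icc 0 d := Set.Icc_subset_Icc hη.1 le_rfl
    have huIcc : Set.uIcc η d = Set.Icc η d := Set.uIcc_of_le hηd
    have hg'sub : ContinuousOn g' (Set.Icc η d) := hg'c.mono hsub
    have hg'i : IntervalIntegrable g' MeasureTheory.volume η d :=
      (huIcc ▸ hg'sub).intervalIntegrable
    have ftc : ∫ t in η..d, g' t = g d - g η :=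
      intervalIntegral.integral_eq_sub_of_hasDerivAt
        (fun t ht => hg t (hsub (huIcc ▸ ht))) hg'i
    have cs : (∫ t in η..d, g' t) ^ 2 ≤ (d - η) * ∫ t in η..d, (g' t) ^ 2 :=
      bk_cs_interval hηd hg'sub
    have hsplit : (∫ t in (0:ℝ)..η, (g' t) ^ 2) + (∫ t in η..d, (g' t) ^ 2) = A := by
      apply intervalIntegral.integral_add_adjacent_intervals
      · exact ((Set.uIcc_of_le hη.1 ▸
          ((hg'c.mono (Set.Icc_subset_Icc le_rfl hηd)).pow 2)).intervalIntegrable)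
      · exact (huIcc ▸ (hg'sub.pow 2)).intervalIntegrable
    have h1 : (∫ t in η..d, (g' t) ^ 2) ≤ A := by
      have h2 : 0 ≤ ∫ t in (0:ℝ)..η, (g' t) ^ 2 :=
        intervalIntegral.integral_nonneg hη.1 fun _ _ => sq_nonneg _
      linarith
    have h3 : 0 ≤ ∫ t in η..d, (g' t) ^ 2 :=
      intervalIntegral.integral_nonneg hηd fun _ _ => sq_nonneg _
    have hgη : g η = g d - ∫ t in η..d, g' t := by linarith
    have hdη : d - η ≤ δbar := by linarith [hη.1]
    have hIA : (∫ t in η..d, g' t) ^ 2 ≤ δbar * A := cs.trans (mul_le_mul hdη h1 h3 hδbar)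
    calc (g η) ^ 2 = (g d - ∫ t in η..d, g' t) ^ 2 := by rw [hgη]
      _ ≤ 2 * (g d) ^ 2 + 2 * (∫ t in η..d, g' t) ^ 2 := by
          nlinarith [sq_nonneg (g d + ∫ t in η..d, g' t)]
      _ ≤ 2 * (g d) ^ 2 + 2 * δbar * A := by linarith
  calc ∫ η in (0:ℝ)..d, (g η) ^ 2
      ≤ ∫ _η in (0:ℝ)..d, (2 * (g d) ^ 2 + 2 * δbar * A) := by
        apply intervalIntegral.integral_mono_on hd0
          ((Set.uIcc_of_le hd0 ▸ (hgc.pow 2)).intervalIntegrable)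
          intervalIntegrable_const hptw
    _ = d * (2 * (g d) ^ 2 + 2 * δbar * A) := by
        rw [intervalIntegral.integral_const]; simp
    _ ≤ 2 * δbar * (g d) ^ 2 + 2 * δbar ^ 2 * A := by
        nlinarith [mul_nonneg (sub_nonneg.mpr hdbar) (sq_nonneg (g d)), mul_nonneg (mul_nonneg hδbar hA0) (sub_nonneg.mpr hdbar)]


/-- Bramble–King type inequality in local coordinates:
`∫∫_S v² ≤ 2δ̄ ∫₀^L v(ξ,δ(ξ))² dξ + 2δ̄² ∫∫_S (∂_η v)²`. -/
theorem bramble_king_inequality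
    (L δbar : ℝ) (hL : 0 < L) (hδbar : 0 ≤ δbar)
    (δ : ℝ → ℝ) (hδcont : ContinuousOn δ (Set.Icc 0 L))
    (hδnonneg : ∀ ξ ∈ Set.Icc (0:ℝ) L, 0 ≤ δ ξ)
    (hδle : ∀ ξ ∈ Set.Icc (0:ℝ) L, δ ξ ≤ δbar)
    (U : Set (ℝ × ℝ)) (hU : IsOpen U)
    (hSU : ∀ ξ ∈ Set.Icc (0:ℝ) L, ∀ η ∈ Set.Icc (0:ℝ) (δ ξ), (ξ, η) ∈ U)
    (v : ℝ × ℝ → ℝ) (hv : ContDiffOn ℝ 1 v U) :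
    ∫ ξ in (0:ℝ)..L, ∫ η in (0:ℝ)..(δ ξ), (v (ξ, η)) ^ 2 ≤
      2 * δbar * (∫ ξ in (0:ℝ)..L, (v (ξ, δ ξ)) ^ 2) +
        2 * δbar ^ 2 * ∫ ξ in (0:ℝ)..L, ∫ η in (0:ℝ)..(δ ξ),
          (fderiv ℝ v (ξ, η) (0, 1)) ^ 2 := by
  -- clamp function onto [0, L]
  set c : ℝ → ℝ := fun ξ => max 0 (min ξ L) with hc_def
  have hc : Continuous c := continuous_const.max (continuous_id.min continuous_const)
  have hcmem : ∀ ξ, c ξ ∈ Set.Icc (0:ℝ) L := fun ξ =>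
    ⟨le_max_left _ _, max_le hL.le (min_le_right _ _)⟩
  have hceq : ∀ ξ ∈ Set.Icc (0:ℝ) L, c ξ = ξ := by
    intro ξ hξ
    simp only [hc_def]
    rw [min_eq_left hξ.2, max_eq_right hξ.1]
  set δ' : ℝ → ℝ := fun ξ => δ (c ξ) with hδ'_def
  have hδ'c : Continuous δ' := hδcont.comp_continuous hc hcmem
  have hδ'eq : ∀ ξ ∈ Set.Icc (0:ℝ) L, δ' ξ = δ ξ := by
    intro ξ hξ; simp only [hδ'_def, hceq ξ hξ]
  -- the compact region under the graph
  set K : Set (ℝ × ℝ) :=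
    {p | 0 ≤ p.1} ∩ {p | p.1 ≤ L} ∩ {p | 0 ≤ p.2} ∩ {p | p.2 ≤ δ' p.1} with hK_def
  have hKclosed : IsClosed K := by
    refine (((isClosed_le continuous_const continuous_fst).inter
      (isClosed_le continuous_fst continuous_const)).inter
      (isClosed_le continuous_const continuous_snd)).inter
      (isClosed_le continuous_snd (hδ'c.comp continuous_fst))
  have hKmem : ∀ ξ ∈ Set.Icc (0:ℝ) L, ∀ η ∈ Set.Icc (0:ℝ) (δ ξ), (ξ, η) ∈ K := by
    intro ξ hξ η hη
    refine ⟨⟨⟨hξ.1, hξ.2⟩, hη.1⟩, ?_⟩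
    show η ≤ δ' ξ
    rw [hδ'eq ξ hξ]; exact hη.2
  have hKU : K ⊆ U := by
    rintro ⟨ξ, η⟩ ⟨⟨⟨h1, h2⟩, h3⟩, h4⟩
    refine hSU ξ ⟨h1, h2⟩ η ⟨h3, ?_⟩
    rw [← hδ'eq ξ ⟨h1, h2⟩]; exact h4
  -- continuity of v and its partial derivative on U
  have hvc : ContinuousOn v U := hv.continuousOn
  have hvd : ∀ p ∈ U, DifferentiableAt ℝ v p := fun p hp =>
    (hv.differentiableOn one_ne_zero).differentiableAt (hU.mem_nhds hp)
  have hfd : ContinuousOn (fun p => fderiv ℝ v p (0, 1)) U := by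
    have h1 : ContinuousOn (fderiv ℝ v) U := hv.continuousOn_fderiv_of_isOpen hU le_rfl
    exact h1.clm_apply continuousOn_const
  -- Tietze extensions of v² and (∂_η v)² from K
  obtain ⟨W₁, hW₁⟩ := ContinuousMap.exists_restrict_eq (Y := ℝ) hKclosed
    ⟨K.restrict (fun p => (v p) ^ 2), (by exact (((hvc.mono hKU).pow 2)).restrict)⟩
  obtain ⟨W₂, hW₂⟩ := ContinuousMap.exists_restrict_eq (Y := ℝ) hKclosed
    ⟨K.restrict (fun p => (fderiv ℝ v p (0, 1)) ^ 2), (by exact (((hfd.mono hKU).pow 2)).restrict)⟩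
  have hw₁ : ∀ p ∈ K, W₁ p = (v p) ^ 2 := fun p hp => ContinuousMap.congr_fun hW₁ ⟨p, hp⟩
  have hw₂ : ∀ p ∈ K, W₂ p = (fderiv ℝ v p (0, 1)) ^ 2 := fun p hp =>
    ContinuousMap.congr_fun hW₂ ⟨p, hp⟩
  -- continuous parametric integrals
  set G₁ : ℝ → ℝ := fun ξ => ∫ η in (0:ℝ)..(δ' ξ), W₁ (ξ, η) with hG₁_def
  set G₂ : ℝ → ℝ := fun ξ => ∫ η in (0:ℝ)..(δ' ξ), W₂ (ξ, η) with hG₂_def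
  set B : ℝ → ℝ := fun ξ => W₁ (ξ, δ' ξ) with hB_def
  have hG₁c : Continuous G₁ :=
    intervalIntegral.continuous_parametric_intervalIntegral_of_continuous
      (f := fun ξ η => W₁ (ξ, η)) (by exact W₁.continuous) hδ'c
  have hG₂c : Continuous G₂ :=
    intervalIntegral.continuous_parametric_intervalIntegral_of_continuous
      (f := fun ξ η => W₂ (ξ, η)) (by exact W₂.continuous) hδ'c
  have hBc : Continuous B := W₁.continuous.comp (continuous_id.prodMk hδ'c)
  have hIccL : Set.uIcc (0:ℝ) L = Set.Icc 0 L := Set.uIcc_of_le hL.le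
  -- rewrite the three integrals in terms of the extensions
  have e1 : (∫ ξ in (0:ℝ)..L, ∫ η in (0:ℝ)..(δ ξ), (v (ξ, η)) ^ 2)
      = ∫ ξ in (0:ℝ)..L, G₁ ξ := by
    apply intervalIntegral.integral_congr
    intro ξ hξ
    rw [hIccL] at hξ
    simp only [hG₁_def, hδ'eq ξ hξ]
    apply intervalIntegral.integral_congr
    intro η hη
    rw [Set.uIcc_of_le (hδnonneg ξ hξ)] at hη
    exact (hw₁ _ (hKmem ξ hξ η hη)).symm
  have e2 : (∫ ξ in (0:ℝ)..L, (v (ξ, δ ξ)) ^ 2) = ∫ ξ in (0:ℝ)..L, B ξ := by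
    apply intervalIntegral.integral_congr
    intro ξ hξ
    rw [hIccL] at hξ
    simp only [hB_def, hδ'eq ξ hξ]
    exact (hw₁ _ (hKmem ξ hξ (δ ξ) ⟨hδnonneg ξ hξ, le_rfl⟩)).symm
  have e3 : (∫ ξ in (0:ℝ)..L, ∫ η in (0:ℝ)..(δ ξ), (fderiv ℝ v (ξ, η) (0, 1)) ^ 2)
      = ∫ ξ in (0:ℝ)..L, G₂ ξ := by
    apply intervalIntegral.integral_congr
    intro ξ hξ
    rw [hIccL] at hξ
    simp only [hG₂_def, hδ'eq ξ hξ]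
    apply intervalIntegral.integral_congr
    intro η hη
    rw [Set.uIcc_of_le (hδnonneg ξ hξ)] at hη
    exact (hw₂ _ (hKmem ξ hξ η hη)).symm
  -- pointwise (fiberwise) inequality
  have hpt : ∀ ξ ∈ Set.Icc (0:ℝ) L, G₁ ξ ≤ 2 * δbar * B ξ + 2 * δbar ^ 2 * G₂ ξ := by
    intro ξ hξ
    have hd0 := hδnonneg ξ hξ
    have hdbar := hδle ξ hξ
    have hcurve : Continuous (fun η : ℝ => ((ξ, η) : ℝ × ℝ)) :=
      continuous_const.prodMk continuous_id
    have hmapU : Set.MapsTo (fun η : ℝ => ((ξ, η) : ℝ × ℝ)) (Set.Icc 0 (δ ξ)) U :=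
      fun η hη => hSU ξ hξ η hη
    have hG₁ξ : G₁ ξ = ∫ η in (0:ℝ)..(δ ξ), (v (ξ, η)) ^ 2 := by
      simp only [hG₁_def, hδ'eq ξ hξ]
      apply intervalIntegral.integral_congr
      intro η hη
      rw [Set.uIcc_of_le hd0] at hη
      exact hw₁ _ (hKmem ξ hξ η hη)
    have hG₂ξ : G₂ ξ = ∫ η in (0:ℝ)..(δ ξ), (fderiv ℝ v (ξ, η) (0, 1)) ^ 2 := by
      simp only [hG₂_def, hδ'eq ξ hξ]
      apply intervalIntegral.integral_congr
      intro η hη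
      rw [Set.uIcc_of_le hd0] at hη
      exact hw₂ _ (hKmem ξ hξ η hη)
    have hBξ : B ξ = (v (ξ, δ ξ)) ^ 2 := by
      simp only [hB_def, hδ'eq ξ hξ]
      exact hw₁ _ (hKmem ξ hξ (δ ξ) ⟨hd0, le_rfl⟩)
    rw [hG₁ξ, hG₂ξ, hBξ]
    apply bk_oneD hd0 hdbar (g := fun η => v (ξ, η))
      (g' := fun η => fderiv ℝ v (ξ, η) (0, 1))
    · intro t ht
      have hmem : ((ξ, t) : ℝ × ℝ) ∈ U := hSU ξ hξ t ht
      have hcd : HasDerivAt (fun η : ℝ => ((ξ, η) : ℝ × ℝ)) (0, 1) t :=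
        HasDerivAt.prodMk (hasDerivAt_const (x := t) (c := ξ)) (hasDerivAt_id t)
      exact ((hvd _ hmem).hasFDerivAt.comp_hasDerivAt t hcd)
    · exact (hvc.comp hcurve.continuousOn hmapU)
    · exact (hfd.comp hcurve.continuousOn hmapU)
  -- combine
  rw [e1, e2, e3]
  have hrhs : Continuous fun ξ => 2 * δbar * B ξ + 2 * δbar ^ 2 * G₂ ξ :=
    ((continuous_const.mul hBc).add (continuous_const.mul hG₂c))
  calc (∫ ξ in (0:ℝ)..L, G₁ ξ)
      ≤ ∫ ξ in (0:ℝ)..L, (2 * δbar * B ξ + 2 * δbar ^ 2 * G₂ ξ) :=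
        intervalIntegral.integral_mono_on hL.le (hG₁c.intervalIntegrable _ _)
          (hrhs.intervalIntegrable _ _) hpt
    _ = 2 * δbar * (∫ ξ in (0:ℝ)..L, B ξ) + 2 * δbar ^ 2 * ∫ ξ in (0:ℝ)..L, G₂ ξ := by
        rw [intervalIntegral.integral_add (by exact (continuous_const.mul hBc).intervalIntegrable _ _ :
            IntervalIntegrable (fun ξ => 2 * δbar * B ξ) MeasureTheory.volume 0 L)
          (by exact (continuous_const.mul hG₂c).intervalIntegrable _ _ :
            IntervalIntegrable (fun ξ => 2 * δbar ^ 2 * G₂ ξ) MeasureTheory.volume 0 L),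
          intervalIntegral.integral_const_mul, intervalIntegral.integral_const_mul]
end
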